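/- For every k with 1 ≤ k ≤ 6, the polynomial μ(ζ) := δ(ζ)/(1 − ζ) = Σ_{ℓ=1}^k (1/ℓ)(1−ζ)^{ℓ−1} of degree k − 1 has no zeros in the closed unit disk: μ(ζ) ≠ 0 for all complex ζ with |ζ| ≤ 1. -/

import Mathlib

private lemma bdf_normLB (x y L : ℝ) (_hL : 0 ≤ L) (h : L^2 ≤ x^2 + y^2) :
    L ≤ ‖(x:ℂ) + (y:ℂ)*Complex.I‖ := by
  have h1 : ‖(x:ℂ) + (y:ℂ)*Complex.I‖^2 = x^2 + y^2 := by
    rw [Complex.sq_norm]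
    simpa using Complex.normSq_add_mul_I x y
  nlinarith [norm_nonneg ((x:ℂ) + (y:ℂ)*Complex.I)]

private lemma bdf_subLB (ζ w : ℂ) (hζ : ‖ζ‖ ≤ 1) (L : ℝ) (h : L ≤ ‖w‖) :
    L - 1 ≤ ‖ζ - w‖ := by
  have h2 : ‖w‖ - ‖ζ‖ ≤ ‖w - ζ‖ := norm_sub_norm_le w ζ
  rw [norm_sub_rev] at h2
  linarith

private lemma bdf_quadLB (ζ : ℂ) (hζ : ‖ζ‖ ≤ 1) (x y L : ℝ) (hL : 1 ≤ L)
    (h : L^2 ≤ x^2 + y^2) :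
    (L-1)^2 ≤ ‖ζ^2 - 2*(x:ℂ)*ζ + ((x:ℂ)^2 + (y:ℂ)^2)‖ := by
  have hfac : ζ^2 - 2*(x:ℂ)*ζ + ((x:ℂ)^2 + (y:ℂ)^2)
      = (ζ - ((x:ℂ) + (y:ℂ)*Complex.I)) * (ζ - ((x:ℂ) - (y:ℂ)*Complex.I)) := by
    linear_combination ((y:ℂ))^2 * Complex.I_sq
  have l1 : L - 1 ≤ ‖ζ - ((x:ℂ) + (y:ℂ)*Complex.I)‖ :=
    bdf_subLB ζ _ hζ L (bdf_normLB x y L (by linarith) h)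
  have l2 : L - 1 ≤ ‖ζ - ((x:ℂ) - (y:ℂ)*Complex.I)‖ := by
    have h3 : L ≤ ‖(x:ℂ) + ((-y:ℝ):ℂ)*Complex.I‖ :=
      bdf_normLB x (-y) L (by linarith) (by nlinarith)
    refine bdf_subLB ζ _ hζ L ?_
    convert h3 using 2
    push_cast; ring
  rw [hfac, norm_mul]
  calc (L-1)^2 = (L-1)*(L-1) := sq (L-1)
    _ ≤ ‖ζ - ((x:ℂ) + (y:ℂ)*Complex.I)‖ * ‖ζ - ((x:ℂ) - (y:ℂ)*Complex.I)‖ :=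
        mul_le_mul l1 l2 (by linarith) (norm_nonneg _)

private lemma bdf_base (c a : ℝ) (h : |c| ≤ a) : ‖((c:ℝ):ℂ)‖ ≤ a := by
  rw [Complex.norm_real, Real.norm_eq_abs]; exact h

private lemma bdf_horner (ζ : ℂ) (hζ : ‖ζ‖ ≤ 1) {s : ℂ} {b : ℝ} (hs : ‖s‖ ≤ b)
    {c a : ℝ} (hc : |c| ≤ a) : ‖(c:ℂ) + ζ * s‖ ≤ a + b := by
  calc ‖(c:ℂ) + ζ * s‖ ≤ ‖(c:ℂ)‖ + ‖ζ‖ * ‖s‖ := by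
        rw [← norm_mul]; exact norm_add_le _ _
    _ ≤ a + b := by
        rw [Complex.norm_real, Real.norm_eq_abs]
        nlinarith [norm_nonneg s, norm_nonneg ζ, hc,
          mul_le_mul hs hζ (norm_nonneg ζ) (le_trans (norm_nonneg s) hs)]

/-- **The reduced BDF polynomial `μ(ζ) = δ(ζ)/(1-ζ)` has no zeros in the closed unit disk.**
For `1 ≤ k ≤ 6` and every complex `ζ` with `|ζ| ≤ 1`,
`μ(ζ) = ∑_{ℓ=1}^k (1/ℓ)(1-ζ)^{ℓ-1} ≠ 0`. -/
theorem bdf_mu_no_zeros_closed_disk (k : ℕ) (hk1 : 1 ≤ k) (hk6 : k ≤ 6)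
    (ζ : ℂ) (hζ : ‖ζ‖ ≤ 1) :
    ∑ ℓ ∈ Finset.Icc 1 k, ((ℓ : ℂ))⁻¹ * (1 - ζ) ^ (ℓ - 1) ≠ 0 := by
  interval_cases k
  · -- k = 1
    rw [show Finset.Icc (1:ℕ) 1 = {1} by rfl]
    norm_num
  · -- k = 2
    rw [show Finset.Icc (1:ℕ) 2 = {1,2} by rfl]
    norm_num [Finset.sum_insert, Finset.mem_insert]
    intro h
    have hz : ζ = 3 := by linear_combination -2*h
    rw [hz] at hζ
    simp at hζ
    
  · -- k = 3
    rw [show Finset.Icc (1:ℕ) 3 = {1,2,3} by rfl]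
    norm_num [Finset.sum_insert, Finset.mem_insert]
    intro h
    have hid : ((11:ℝ):ℂ) = ((0:ℝ):ℂ) + ζ * (((7:ℝ):ℂ) + ζ * ((-2:ℝ):ℂ)) := by
      push_cast
      linear_combination 6*h
    have hR : ‖((0:ℝ):ℂ) + ζ * (((7:ℝ):ℂ) + ζ * ((-2:ℝ):ℂ))‖
        ≤ (0:ℝ) + ((7:ℝ) + (2:ℝ)) :=
      bdf_horner ζ hζ (bdf_horner ζ hζ (bdf_base _ _ (by norm_num [abs_le]))
        (by norm_num [abs_le])) (by norm_num [abs_le])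
    rw [← hid, Complex.norm_real, Real.norm_eq_abs] at hR
    norm_num at hR
  · -- k = 4
    rw [show Finset.Icc (1:ℕ) 4 = {1,2,3,4} by rfl]
    norm_num [Finset.sum_insert, Finset.mem_insert]
    intro h
    have hid : ((1/4:ℝ):ℂ) * (ζ - ((131/50:ℝ):ℂ)) *
        (ζ^2 - 2*((43/50:ℝ):ℂ)*ζ + (((43/50:ℝ):ℂ)^2 + ((39/25:ℝ):ℂ)^2))
        = ((7331/1500000:ℝ):ℂ) + ζ * (((97/30000:ℝ):ℂ) + ζ * ((-1/600:ℝ):ℂ)) := by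
      push_cast
      linear_combination -h
    have hl : (131/50:ℝ) - 1 ≤ ‖ζ - ((131/50:ℝ):ℂ)‖ := by
      refine bdf_subLB ζ _ hζ _ (le_of_eq ?_)
      rw [Complex.norm_real]; norm_num
    have hq : ((89/50:ℝ)-1)^2 ≤
        ‖ζ^2 - 2*((43/50:ℝ):ℂ)*ζ + (((43/50:ℝ):ℂ)^2 + ((39/25:ℝ):ℂ)^2)‖ :=
      bdf_quadLB ζ hζ _ _ _ (by norm_num) (by norm_num)
    have hR : ‖((7331/1500000:ℝ):ℂ) + ζ * (((97/30000:ℝ):ℂ) + ζ * ((-1/600:ℝ):ℂ))‖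
        ≤ (7331/1500000:ℝ) + ((97/30000:ℝ) + (1/600:ℝ)) :=
      bdf_horner ζ hζ (bdf_horner ζ hζ (bdf_base _ _ (by norm_num [abs_le]))
        (by norm_num [abs_le])) (by norm_num [abs_le])
    rw [← hid] at hR
    rw [norm_mul, norm_mul, Complex.norm_real] at hR
    have hAB : ((131/50:ℝ) - 1) * (((89/50:ℝ)-1)^2) ≤ ‖ζ - ((131/50:ℝ):ℂ)‖ *
        ‖ζ^2 - 2*((43/50:ℝ):ℂ)*ζ + (((43/50:ℝ):ℂ)^2 + ((39/25:ℝ):ℂ)^2)‖ :=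
      mul_le_mul hl hq (by norm_num) ((by norm_num : (0:ℝ) ≤ 131/50 - 1).trans hl)
    norm_num at hR hAB
    nlinarith [hR, hAB]
  · -- k = 5
    rw [show Finset.Icc (1:ℕ) 5 = {1,2,3,4,5} by rfl]
    norm_num [Finset.sum_insert, Finset.mem_insert]
    intro h
    have hid : ((1/5:ℝ):ℂ) *
        (ζ^2 - 2*((221/100:ℝ):ℂ)*ζ + (((221/100:ℝ):ℂ)^2 + ((93/100:ℝ):ℂ)^2)) *
        (ζ^2 - 2*((21/50:ℝ):ℂ)*ζ + (((21/50:ℝ):ℂ)^2 + ((27/20:ℝ):ℂ)^2))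
        = ((2250283/150000000:ℝ):ℂ) + ζ * (((-121447/7500000:ℝ):ℂ) +
            ζ * (((1321/150000:ℝ):ℂ) + ζ * ((-1/500:ℝ):ℂ))) := by
      push_cast
      linear_combination h
    have hq1 : ((239/100:ℝ)-1)^2 ≤
        ‖ζ^2 - 2*((221/100:ℝ):ℂ)*ζ + (((221/100:ℝ):ℂ)^2 + ((93/100:ℝ):ℂ)^2)‖ :=
      bdf_quadLB ζ hζ _ _ _ (by norm_num) (by norm_num)
    have hq2 : ((141/100:ℝ)-1)^2 ≤
        ‖ζ^2 - 2*((21/50:ℝ):ℂ)*ζ + (((21/50:ℝ):ℂ)^2 + ((27/20:ℝ):ℂ)^2)‖ :=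
      bdf_quadLB ζ hζ _ _ _ (by norm_num) (by norm_num)
    have hR : ‖((2250283/150000000:ℝ):ℂ) + ζ * (((-121447/7500000:ℝ):ℂ) +
            ζ * (((1321/150000:ℝ):ℂ) + ζ * ((-1/500:ℝ):ℂ)))‖
        ≤ (2250283/150000000:ℝ) + ((121447/7500000:ℝ) +
            ((1321/150000:ℝ) + (1/500:ℝ))) :=
      bdf_horner ζ hζ (bdf_horner ζ hζ (bdf_horner ζ hζ
        (bdf_base _ _ (by norm_num [abs_le])) (by norm_num [abs_le]))
        (by norm_num [abs_le])) (by norm_num [abs_le])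
    rw [← hid] at hR
    rw [norm_mul, norm_mul, Complex.norm_real] at hR
    have hAB : (((239/100:ℝ)-1)^2) * (((141/100:ℝ)-1)^2) ≤
        ‖ζ^2 - 2*((221/100:ℝ):ℂ)*ζ + (((221/100:ℝ):ℂ)^2 + ((93/100:ℝ):ℂ)^2)‖ *
        ‖ζ^2 - 2*((21/50:ℝ):ℂ)*ζ + (((21/50:ℝ):ℂ)^2 + ((27/20:ℝ):ℂ)^2)‖ :=
      mul_le_mul hq1 hq2 (by norm_num) ((by norm_num : (0:ℝ) ≤ (239/100-1)^2).trans hq1)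
    norm_num at hR hAB
    nlinarith [hR, hAB]
  · -- k = 6
    rw [show Finset.Icc (1:ℕ) 6 = {1,2,3,4,5,6} by rfl]
    norm_num [Finset.sum_insert, Finset.mem_insert]
    intro h
    have hid : ((1/6:ℝ):ℂ) * (ζ - ((24623/10000:ℝ):ℂ)) *
        (ζ^2 - 2*((837/500:ℝ):ℂ)*ζ + (((837/500:ℝ):ℂ)^2 + ((6419/5000:ℝ):ℂ)^2)) *
        (ζ^2 - 2*((1949/10000:ℝ):ℂ)*ζ + (((1949/10000:ℝ):ℂ)^2 + ((11417/10000:ℝ):ℂ)^2))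
        = ((-320745305992747/15000000000000000000:ℝ):ℂ) +
          ζ * (((221250682771/3750000000000000:ℝ):ℂ) +
          ζ * (((-388770557/3000000000000:ℝ):ℂ) +
          ζ * (((12967/150000000:ℝ):ℂ) + ζ * ((-1/60000:ℝ):ℂ)))) := by
      push_cast
      linear_combination -h
    have hl : (24623/10000:ℝ) - 1 ≤ ‖ζ - ((24623/10000:ℝ):ℂ)‖ := by
      refine bdf_subLB ζ _ hζ _ (le_of_eq ?_)
      rw [Complex.norm_real]; norm_num
    have hq1 : ((2637/1250:ℝ)-1)^2 ≤
        ‖ζ^2 - 2*((837/500:ℝ):ℂ)*ζ + (((837/500:ℝ):ℂ)^2 + ((6419/5000:ℝ):ℂ)^2)‖ :=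
      bdf_quadLB ζ hζ _ _ _ (by norm_num) (by norm_num)
    have hq2 : ((5791/5000:ℝ)-1)^2 ≤
        ‖ζ^2 - 2*((1949/10000:ℝ):ℂ)*ζ + (((1949/10000:ℝ):ℂ)^2 + ((11417/10000:ℝ):ℂ)^2)‖ :=
      bdf_quadLB ζ hζ _ _ _ (by norm_num) (by norm_num)
    have hR : ‖((-320745305992747/15000000000000000000:ℝ):ℂ) +
          ζ * (((221250682771/3750000000000000:ℝ):ℂ) +
          ζ * (((-388770557/3000000000000:ℝ):ℂ) +
          ζ * (((12967/150000000:ℝ):ℂ) + ζ * ((-1/60000:ℝ):ℂ))))‖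
        ≤ (320745305992747/15000000000000000000:ℝ) +
          ((221250682771/3750000000000000:ℝ) +
          ((388770557/3000000000000:ℝ) +
          ((12967/150000000:ℝ) + (1/60000:ℝ)))) :=
      bdf_horner ζ hζ (bdf_horner ζ hζ (bdf_horner ζ hζ (bdf_horner ζ hζ
        (bdf_base _ _ (by norm_num [abs_le])) (by norm_num [abs_le]))
        (by norm_num [abs_le])) (by norm_num [abs_le])) (by norm_num [abs_le])
    rw [← hid] at hR
    rw [norm_mul, norm_mul, norm_mul, Complex.norm_real] at hR
    have h12 : ((24623/10000:ℝ) - 1) * (((2637/1250:ℝ)-1)^2) ≤ ‖ζ - ((24623/10000:ℝ):ℂ)‖ *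
        ‖ζ^2 - 2*((837/500:ℝ):ℂ)*ζ + (((837/500:ℝ):ℂ)^2 + ((6419/5000:ℝ):ℂ)^2)‖ :=
      mul_le_mul hl hq1 (by norm_num) ((by norm_num : (0:ℝ) ≤ 24623/10000 - 1).trans hl)
    have h123 : (((24623/10000:ℝ) - 1) * (((2637/1250:ℝ)-1)^2)) * (((5791/5000:ℝ)-1)^2) ≤
        (‖ζ - ((24623/10000:ℝ):ℂ)‖ *
        ‖ζ^2 - 2*((837/500:ℝ):ℂ)*ζ + (((837/500:ℝ):ℂ)^2 + ((6419/5000:ℝ):ℂ)^2)‖) *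
        ‖ζ^2 - 2*((1949/10000:ℝ):ℂ)*ζ + (((1949/10000:ℝ):ℂ)^2 + ((11417/10000:ℝ):ℂ)^2)‖ :=
      mul_le_mul h12 hq2 (by norm_num)
        ((by norm_num : (0:ℝ) ≤ (24623/10000 - 1) * ((2637/1250-1)^2)).trans h12)
    norm_num at hR h123
    nlinarith [hR, h123]
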